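/- arXiv:2210.03284 — 4 statements merged into one kernel-verified Lean document; each statement's English description precedes it below -/
import Mathlib

section
/- For every integer m ≥ 2 there exist elements f₁ and f₀ in the subalgebra of R generated by w₂² and w₃² such that for every x in the subalgebra A of R generated by w₂ and w₃ one has Q_m(x) = f₁ · Q_1(x) + f₀ · Q_0(x). -/
open MvPolynomial

/-- `R = ℤ/2[s₁, s₂]`, the mod 2 cohomology of `B(ℤ/2)²`. -/
noncomputable abbrev R : Type := MvPolynomial (Fin 2) (ZMod 2)

/-- The `m`-th Milnor operation `Q_m`, the derivation with `Q_m(sᵢ) = sᵢ^(2^(m+1))`. -/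
noncomputable def Q (m : ℕ) : Derivation (ZMod 2) R R :=
  MvPolynomial.mkDerivation (ZMod 2) (fun i : Fin 2 => (X i : R) ^ 2 ^ (m + 1))

/-- `w₂ = s₁² + s₁s₂ + s₂²`. -/
noncomputable def w₂ : R := X 0 ^ 2 + X 0 * X 1 + X 1 ^ 2

/-- `w₃ = s₁²s₂ + s₁s₂²`. -/
noncomputable def w₃ : R := X 0 ^ 2 * X 1 + X 0 * X 1 ^ 2

lemma h2 : (2 : R) = 0 := CharTwo.two_eq_zero

lemma keyX (i : Fin 2) : (X i : R) ^ 4 = w₂ * X i ^ 2 + w₃ * X i := by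
  unfold w₂ w₃
  match i with
  | 0 => linear_combination (-(X 0^3 * X 1 + X 0^2 * X 1^2) : R) * h2
  | 1 => linear_combination (-(X 0 * X 1^3 + X 0^2 * X 1^2) : R) * h2

lemma keyX' (i : Fin 2) (m : ℕ) :
    (X i : R) ^ 2 ^ (m+2) = w₂ ^ 2^m * X i ^ 2^(m+1) + w₃ ^ 2^m * X i ^ 2^m := by
  have h := congrArg (· ^ 2^m) (keyX i)
  simp only [add_pow_char_pow, mul_pow, ← pow_mul] at h
  calc (X i : R) ^ 2 ^ (m+2) = (X i : R) ^ (4 * 2^m) := by ring_nf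
    _ = w₂ ^ 2^m * X i ^ (2 * 2^m) + w₃ ^ 2^m * X i ^ 2^m := by
        simpa using h
    _ = _ := by ring_nf

lemma Qw2 (m : ℕ) : Q m w₂ = X 1 * X 0 ^ 2 ^ (m+1) + X 0 * X 1 ^ 2 ^ (m+1) := by
  unfold w₂
  simp only [Q, map_add, Derivation.leibniz, Derivation.leibniz_pow, mkDerivation_X,
    smul_eq_mul]
  linear_combination (X 0 * X 0 ^ 2^(m+1) + X 1 * X 1 ^ 2^(m+1) : R) * h2

lemma Qw3 (m : ℕ) : Q m w₃ = X 1 ^ 2 * X 0 ^ 2 ^ (m+1) + X 0 ^ 2 * X 1 ^ 2 ^ (m+1) := by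
  unfold w₃
  simp only [Q, map_add, Derivation.leibniz, Derivation.leibniz_pow, mkDerivation_X,
    smul_eq_mul]
  linear_combination (X 0 * X 1 * X 0 ^ 2^(m+1) + X 0 * X 1 * X 1 ^ 2^(m+1) : R) * h2

lemma Qw2_rec (m : ℕ) :
    Q (m+2) w₂ = w₂ ^ 2^(m+1) * Q (m+1) w₂ + w₃ ^ 2^(m+1) * Q m w₂ := by
  rw [Qw2, Qw2, Qw2, keyX' 0 (m+1), keyX' 1 (m+1)]
  ring

lemma Qw3_rec (m : ℕ) :
    Q (m+2) w₃ = w₂ ^ 2^(m+1) * Q (m+1) w₃ + w₃ ^ 2^(m+1) * Q m w₃ := by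
  rw [Qw3, Qw3, Qw3, keyX' 0 (m+1), keyX' 1 (m+1)]
  ring

lemma key_gen (m : ℕ) :
    ∃ f₁ ∈ Algebra.adjoin (ZMod 2) ({w₂ ^ 2, w₃ ^ 2} : Set R),
      ∃ f₀ ∈ Algebra.adjoin (ZMod 2) ({w₂ ^ 2, w₃ ^ 2} : Set R),
        Q m w₂ = f₁ * Q 1 w₂ + f₀ * Q 0 w₂ ∧
        Q m w₃ = f₁ * Q 1 w₃ + f₀ * Q 0 w₃ := by
  induction m using Nat.twoStepInduction with
  | zero =>
    exact ⟨0, Subalgebra.zero_mem _, 1, Subalgebra.one_mem _, by ring, by ring⟩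
  | one =>
    exact ⟨1, Subalgebra.one_mem _, 0, Subalgebra.zero_mem _, by ring, by ring⟩
  | more m ih ih' =>
    obtain ⟨f₁, hf₁, f₀, hf₀, h2, h3⟩ := ih
    obtain ⟨g₁, hg₁, g₀, hg₀, h2', h3'⟩ := ih'
    have hw2 : w₂ ^ 2^(m+1) ∈ Algebra.adjoin (ZMod 2) ({w₂ ^ 2, w₃ ^ 2} : Set R) := by
      have : w₂ ^ 2^(m+1) = (w₂ ^ 2) ^ 2^m := by rw [← pow_mul]; ring_nf
      rw [this]
      exact pow_mem (Algebra.subset_adjoin (by simp)) _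
    have hw3 : w₃ ^ 2^(m+1) ∈ Algebra.adjoin (ZMod 2) ({w₂ ^ 2, w₃ ^ 2} : Set R) := by
      have : w₃ ^ 2^(m+1) = (w₃ ^ 2) ^ 2^m := by rw [← pow_mul]; ring_nf
      rw [this]
      exact pow_mem (Algebra.subset_adjoin (by simp)) _
    refine ⟨w₂ ^ 2^(m+1) * g₁ + w₃ ^ 2^(m+1) * f₁,
      add_mem (mul_mem hw2 hg₁) (mul_mem hw3 hf₁),
      w₂ ^ 2^(m+1) * g₀ + w₃ ^ 2^(m+1) * f₀,
      add_mem (mul_mem hw2 hg₀) (mul_mem hw3 hf₀), ?_, ?_⟩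
    · rw [Qw2_rec, h2, h2']; ring
    · rw [Qw3_rec, h3, h3']; ring

theorem stmt_2 (m : ℕ) (hm : 2 ≤ m) :
    ∃ f₁ ∈ Algebra.adjoin (ZMod 2) ({w₂ ^ 2, w₃ ^ 2} : Set R),
      ∃ f₀ ∈ Algebra.adjoin (ZMod 2) ({w₂ ^ 2, w₃ ^ 2} : Set R),
        ∀ x ∈ Algebra.adjoin (ZMod 2) ({w₂, w₃} : Set R),
          Q m x = f₁ * Q 1 x + f₀ * Q 0 x := by
  obtain ⟨f₁, hf₁, f₀, hf₀, e2, e3⟩ := key_gen m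
  refine ⟨f₁, hf₁, f₀, hf₀, fun x hx => ?_⟩
  have h : Set.EqOn (Q m) (f₁ • Q 1 + f₀ • Q 0 : Derivation (ZMod 2) R R)
      ({w₂, w₃} : Set R) := by
    intro y hy
    rcases hy with rfl | rfl <;>
      simp only [Derivation.add_apply, Derivation.smul_apply, smul_eq_mul] <;>
      assumption
  have := Derivation.eqOn_adjoin h hx
  simpa only [Derivation.add_apply, Derivation.smul_apply, smul_eq_mul] using this
end

section
/- For every integer k ≥ 3, with the weight grading wt(a)=0, wt(b)=1, wt(c)=0, wt(d)=1 on S and N_k := π(weightedHomogeneousSubmodule of weight k): N_k is the ℤ/2-span of the images π(a^m·b^k), π(c^n·b·d^(k−1)), and π(c^n·d^k) (m, n ≥ 0), and this family of images is ℤ/2-linearly independent in N (so it is a basis of N_k). -/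
open MvPolynomial

/-- `S = ℤ/2[a,b,c,d] ≅ H^*(BSO(3)²; ℤ/2)` with `a = w₂'`, `b = w₃'`, `c = w₂''`, `d = w₃''`. -/
noncomputable abbrev S : Type := MvPolynomial (Fin 4) (ZMod 2)

noncomputable def a : S := X 0
noncomputable def b : S := X 1
noncomputable def c : S := X 2
noncomputable def d : S := X 3

/-- The ideal `J = (a·d + c·b, b·d² + b²·d)` of relations. -/
noncomputable def J : Ideal S := Ideal.span {a * d + c * b, b * d ^ 2 + b ^ 2 * d}

/-- `N = S ⧸ J`, the bottom line of the `E_∞`-term. -/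
noncomputable abbrev N : Type := S ⧸ J

/-- The quotient map `π : S → N`. -/
noncomputable def π : S →+* N := Ideal.Quotient.mk J

/-- The weights `wt(a) = 0`, `wt(b) = 1`, `wt(c) = 0`, `wt(d) = 1`. -/
def wt : Fin 4 → ℕ := ![0, 1, 0, 1]

/-- `N_k`: the image under `π` of the weighted-homogeneous polynomials of weight `k`. -/
noncomputable def Nwt (k : ℕ) : Submodule (ZMod 2) N :=
  Submodule.map (Ideal.Quotient.mkₐ (ZMod 2) J).toLinearMap
    (weightedHomogeneousSubmodule (ZMod 2) wt k)


set_option linter.unreachableTactic false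
set_option linter.unusedTactic false
set_option linter.unnecessarySeqFocus false

lemma char2 (x : S) : x + x = 0 := by
  have : ((2 : ZMod 2) : ZMod 2) = 0 := rfl
  calc x + x = (2 : ZMod 2) • x := (two_smul (ZMod 2) x).symm
  _ = 0 := by rw [this, zero_smul]

lemma πJ (x : S) (hx : x ∈ J) : π x = 0 := Ideal.Quotient.eq_zero_iff_mem.mpr hx

lemma hA : π (a * d) = π (c * b) := by
  have h : a * d = (a * d + c * b) + c * b := by rw [add_assoc, char2, add_zero]
  rw [h, map_add, πJ _ (Ideal.subset_span (by simp)), zero_add]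

lemma hB : π (b ^ 2 * d) = π (b * d ^ 2) := by
  have h : b ^ 2 * d = (b * d ^ 2 + b ^ 2 * d) + b * d ^ 2 := by
    rw [add_comm (b * d^2), add_assoc, char2, add_zero]
  rw [h, map_add, πJ _ (Ideal.subset_span (by simp)), zero_add]

noncomputable def vfam (k : ℕ) : ℕ ⊕ (ℕ ⊕ ℕ) → N :=
  Sum.elim (fun m : ℕ => π (a ^ m * b ^ k))
    (Sum.elim (fun n : ℕ => π (c ^ n * b * d ^ (k - 1)))
      (fun n : ℕ => π (c ^ n * d ^ k)))

lemma stepA (i l j m : ℕ) :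
    π (a ^ (i+1) * b ^ j * c ^ l * d ^ (m+1)) = π (a ^ i * b ^ (j+1) * c ^ (l+1) * d ^ m) := by
  have h1 : a ^ (i+1) * b ^ j * c ^ l * d ^ (m+1) = (a * d) * (a ^ i * b ^ j * c ^ l * d ^ m) := by
    ring
  have h2 : a ^ i * b ^ (j+1) * c ^ (l+1) * d ^ m = (c * b) * (a ^ i * b ^ j * c ^ l * d ^ m) := by
    ring
  rw [h1, h2, map_mul π (a*d), map_mul π (c*b), hA]

lemma stepB (i l j m : ℕ) :
    π (a ^ i * b ^ (j+2) * c ^ l * d ^ (m+1)) = π (a ^ i * b ^ (j+1) * c ^ l * d ^ (m+2)) := by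
  have h1 : a ^ i * b ^ (j+2) * c ^ l * d ^ (m+1) = (b^2 * d) * (a ^ i * b ^ j * c ^ l * d ^ m) := by
    ring
  have h2 : a ^ i * b ^ (j+1) * c ^ l * d ^ (m+2) = (b * d^2) * (a ^ i * b ^ j * c ^ l * d ^ m) := by
    ring
  rw [h1, h2, map_mul π (b^2*d), map_mul π (b*d^2), hB]

section
variable (k : ℕ) (hk : 3 ≤ k)

lemma keyP (hk : 3 ≤ k) : ∀ i l j m : ℕ, j + m = k → 1 ≤ m →
    π (a ^ i * b ^ j * c ^ l * d ^ m) ∈ Submodule.span (ZMod 2) (Set.range (vfam k)) := by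
  intro i
  induction i with
  | zero =>
    intro l j
    induction j with
    | zero =>
      intro m hm _
      have : (0:ℕ) + m = k := hm
      have hmk : m = k := by omega
      subst hmk
      apply Submodule.subset_span
      exact ⟨Sum.inr (Sum.inr l), by show π _ = π _; congr 1; ring⟩
    | succ j ih =>
      intro m hm hm1
      match j, m with
      | 0, m =>
        apply Submodule.subset_span
        refine ⟨Sum.inr (Sum.inl l), ?_⟩
        show vfam k _ = π _
        have : m = k - 1 := by omega
        subst this
        show π _ = π _
        congr 1
        ring
      | j+1, m+1 =>
        rw [stepB 0 l j m]
        exact ih (m+2) (by omega) (by omega)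
  | succ i ihi =>
    intro l j
    induction j with
    | zero =>
      intro m hm hm1
      match m with
      | m+1 =>
        rw [stepA i l 0 m]
        exact ihi (l+1) 1 m (by omega) (by omega)
    | succ j ihj =>
      intro m hm hm1
      match j, m with
      | 0, m+1 =>
        rw [stepA i l 1 m]
        exact ihi (l+1) 2 m (by omega) (by omega)
      | j+1, m+1 =>
        rw [stepB (i+1) l j m]
        exact ihj (m+2) (by omega) (by omega)
end

section
variable (k : ℕ)

lemma stepC (i l j : ℕ) :
    π (a ^ i * b ^ (j+1) * c ^ (l+1) * d ^ 0) = π (a ^ (i+1) * b ^ j * c ^ l * d ^ 1) := by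
  have h1 : a ^ i * b ^ (j+1) * c ^ (l+1) * d ^ 0 = (c * b) * (a ^ i * b ^ j * c ^ l * d ^ 0) := by
    ring
  have h2 : a ^ (i+1) * b ^ j * c ^ l * d ^ 1 = (a * d) * (a ^ i * b ^ j * c ^ l * d ^ 0) := by
    ring
  rw [h1, h2, map_mul π (c*b), map_mul π (a*d), hA]

lemma keyMain (hk : 3 ≤ k) : ∀ i l j m : ℕ, j + m = k →
    π (a ^ i * b ^ j * c ^ l * d ^ m) ∈ Submodule.span (ZMod 2) (Set.range (vfam k)) := by
  intro i l j m hjm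
  match m, l with
  | m+1, l => exact keyP k hk i l j (m+1) hjm (by omega)
  | 0, 0 =>
    apply Submodule.subset_span
    refine ⟨Sum.inl i, ?_⟩
    show π _ = π _
    have : j = k := by omega
    subst this
    congr 1
    ring
  | 0, l+1 =>
    obtain ⟨j', rfl⟩ : ∃ j', j = j'+1 := ⟨j-1, by omega⟩
    rw [stepC i l j']
    exact keyP k hk (i+1) l j' 1 (by omega) (by omega)
end


lemma monomial_eq_prod (e : Fin 4 →₀ ℕ) :
    (monomial e (1 : ZMod 2) : S) = a ^ e 0 * b ^ e 1 * c ^ e 2 * d ^ e 3 := by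
  rw [monomial_eq]
  rw [Finsupp.prod_pow]
  simp [a, b, c, d, Fin.prod_univ_four, mul_assoc]

lemma weight_eq (e : Fin 4 →₀ ℕ) : Finsupp.weight wt e = e 1 + e 3 := by
  rw [Finsupp.weight_apply, Finsupp.sum_fintype]
  · simp [Fin.sum_univ_four, wt]
  · intro i; simp


lemma isWH (k i j l m : ℕ) (h : j + m = k) :
    (a^i * b^j * c^l * d^m) ∈ weightedHomogeneousSubmodule (ZMod 2) wt k := by
  set e : Fin 4 →₀ ℕ := Finsupp.equivFunOnFinite.symm ![i,j,l,m] with hedef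
  have h0 : e 0 = i := rfl
  have h1 : e 1 = j := rfl
  have h2 : e 2 = l := rfl
  have h3 : e 3 = m := rfl
  have he : a^i*b^j*c^l*d^m = monomial e 1 := by
    rw [monomial_eq_prod, h0, h1, h2, h3]
  rw [mem_weightedHomogeneousSubmodule, he]
  exact isWeightedHomogeneous_monomial _ _ _ (by rw [weight_eq, h1, h3, h])

lemma span_eq (k : ℕ) (hk : 3 ≤ k) :
    Nwt k = Submodule.span (ZMod 2) (Set.range (vfam k)) := by
  apply le_antisymm
  · rintro x ⟨p, hp, rfl⟩
    replace hp : MvPolynomial.IsWeightedHomogeneous wt p k := hp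
    show (Ideal.Quotient.mkₐ (ZMod 2) J).toLinearMap p ∈ _
    rw [← support_sum_monomial_coeff p, map_sum]
    apply Submodule.sum_mem
    intro e he
    have hco : coeff e p ≠ 0 := mem_support_iff.mp he
    have hwe : Finsupp.weight wt e = k := hp hco
    rw [weight_eq] at hwe
    have hmono : (monomial e (coeff e p) : S) = (coeff e p) • monomial e 1 := by
      rw [smul_monomial, smul_eq_mul, mul_one]
    rw [hmono, map_smul]
    apply Submodule.smul_mem
    have : (Ideal.Quotient.mkₐ (ZMod 2) J).toLinearMap (monomial e 1) =
        π (a ^ e 0 * b ^ e 1 * c ^ e 2 * d ^ e 3) := by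
      rw [monomial_eq_prod]; rfl
    rw [this]
    exact keyMain k hk (e 0) (e 2) (e 1) (e 3) hwe
  · rw [Submodule.span_le]
    rintro x ⟨i, rfl⟩
    match i with
    | Sum.inl m =>
      refine ⟨a ^ m * b ^ k * c ^ 0 * d ^ 0, isWH k m k 0 0 (by omega), ?_⟩
      show π _ = π _
      congr 1
      ring
    | Sum.inr (Sum.inl n) =>
      refine ⟨a ^ 0 * b ^ 1 * c ^ n * d ^ (k-1), isWH k 0 1 n (k-1) (by omega), ?_⟩
      show π _ = π _
      congr 1
      ring
    | Sum.inr (Sum.inr n) =>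
      refine ⟨a ^ 0 * b ^ 0 * c ^ n * d ^ k, isWH k 0 0 n k (by omega), ?_⟩
      show π _ = π _
      congr 1
      ring

noncomputable def ee (i j l m : ℕ) : Fin 4 →₀ ℕ := Finsupp.equivFunOnFinite.symm ![i,j,l,m]

lemma mono_eq (i j l m : ℕ) : a^i*b^j*c^l*d^m = monomial (ee i j l m) (1 : ZMod 2) := by
  rw [monomial_eq_prod]; rfl

lemma ee_inj {i j l m i' j' l' m' : ℕ} :
    ee i j l m = ee i' j' l' m' ↔ (i = i' ∧ j = j' ∧ l = l' ∧ m = m') := by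
  constructor
  · intro h
    refine ⟨congrArg (fun e => e 0) h, congrArg (fun e => e 1) h,
      congrArg (fun e => e 2) h, congrArg (fun e => e 3) h⟩
  · rintro ⟨rfl, rfl, rfl, rfl⟩; rfl

lemma coeff_mono (i j l m i' j' l' m' : ℕ) :
    coeff (ee i' j' l' m') (a^i*b^j*c^l*d^m) =
      if i = i' ∧ j = j' ∧ l = l' ∧ m = m' then 1 else 0 := by
  rw [mono_eq, coeff_monomial, if_congr ee_inj rfl rfl]

noncomputable def φ1 : S →ₐ[ZMod 2] S := aeval ![X 0, X 1, 0, 0]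
noncomputable def φ2 : S →ₐ[ZMod 2] S := aeval ![0, 0, X 2, X 3]
noncomputable def ψh : S →ₐ[ZMod 2] S := aeval ![X 2, X 3, X 2, X 3]

lemma lift_aux (f : S →ₐ[ZMod 2] S) (h1 : f (a*d+c*b) = 0) (h2 : f (b*d^2+b^2*d) = 0) :
    ∀ x ∈ J, f x = 0 := by
  intro x hx
  have hJ : J ≤ RingHom.ker (f : S →+* S) := by
    rw [J, Ideal.span_le]
    rintro y hy
    simp only [Set.mem_insert_iff, Set.mem_singleton_iff] at hy
    rcases hy with rfl | rfl
    · exact h1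
    · exact h2
  exact hJ hx

lemma φ1J : ∀ x ∈ J, φ1 x = 0 := by
  apply lift_aux <;> simp [a, b, c, d, φ1]

lemma φ2J : ∀ x ∈ J, φ2 x = 0 := by
  apply lift_aux <;> simp [a, b, c, d, φ2]

lemma two_eq_zero : (2 : S) = 0 := by
  rw [show (2:S) = 1 + 1 by norm_num]; exact char2 1

lemma ψJ : ∀ x ∈ J, ψh x = 0 := by
  apply lift_aux <;> · simp [a, b, c, d, ψh]; ring_nf; simp [two_eq_zero]

noncomputable def Φ1 : N →ₐ[ZMod 2] S := Ideal.Quotient.liftₐ J φ1 φ1J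
noncomputable def Φ2 : N →ₐ[ZMod 2] S := Ideal.Quotient.liftₐ J φ2 φ2J
noncomputable def Φ3 : N →ₐ[ZMod 2] S := Ideal.Quotient.liftₐ J ψh ψJ

lemma Φ1π (x : S) : Φ1 (π x) = φ1 x := rfl
lemma Φ2π (x : S) : Φ2 (π x) = φ2 x := rfl
lemma Φ3π (x : S) : Φ3 (π x) = ψh x := rfl

lemma φ1_abk (m j : ℕ) : φ1 (a^m * b^j) = a^m*b^j*c^0*d^0 := by
  simp only [map_mul, map_pow, φ1, a, b, c, d, aeval_X]
  simp <;> ring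

lemma φ1_cbd (n j : ℕ) (hj : j ≠ 0) : φ1 (c^n * b * d^j) = 0 := by
  simp only [map_mul, map_pow, φ1, a, b, c, d, aeval_X]
  simp [zero_pow hj]

lemma φ1_cdk (n j : ℕ) (hj : j ≠ 0) : φ1 (c^n * d^j) = 0 := by
  simp only [map_mul, map_pow, φ1, a, b, c, d, aeval_X]
  simp [zero_pow hj]

lemma φ2_abk (m j : ℕ) (hj : j ≠ 0) : φ2 (a^m * b^j) = 0 := by
  simp only [map_mul, map_pow, φ2, a, b, c, d, aeval_X]
  simp [zero_pow hj]

lemma φ2_cbd (n j : ℕ) : φ2 (c^n * b * d^j) = 0 := by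
  simp only [map_mul, map_pow, φ2, a, b, c, d, aeval_X]
  simp

lemma φ2_cdk (n j : ℕ) : φ2 (c^n * d^j) = a^0*b^0*c^n*d^j := by
  simp only [map_mul, map_pow, φ2, a, b, c, d, aeval_X]
  simp <;> ring

lemma ψh_abk (m j : ℕ) : ψh (a^m * b^j) = a^0*b^0*c^m*d^j := by
  simp only [map_mul, map_pow, ψh, a, b, c, d, aeval_X]
  simp <;> ring

lemma ψh_cbd (n j : ℕ) : ψh (c^n * b * d^j) = a^0*b^0*c^n*d^(j+1) := by
  simp only [map_mul, map_pow, ψh, a, b, c, d, aeval_X]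
  simp <;> ring

lemma ψh_cdk (n j : ℕ) : ψh (c^n * d^j) = a^0*b^0*c^n*d^j := by
  simp only [map_mul, map_pow, ψh, a, b, c, d, aeval_X]
  simp <;> ring

noncomputable def χ (k : ℕ) : ℕ ⊕ (ℕ ⊕ ℕ) → (N →ₗ[ZMod 2] ZMod 2)
  | Sum.inl m => (lcoeff (ZMod 2) (ee m k 0 0)).comp Φ1.toLinearMap
  | Sum.inr (Sum.inl n) => (lcoeff (ZMod 2) (ee 0 0 n k)).comp
      (Φ3.toLinearMap + ψh.toLinearMap.comp Φ1.toLinearMap + Φ2.toLinearMap)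
  | Sum.inr (Sum.inr n) => (lcoeff (ZMod 2) (ee 0 0 n k)).comp Φ2.toLinearMap

lemma chi_delta (k : ℕ) (hk : 3 ≤ k) (i i' : ℕ ⊕ (ℕ ⊕ ℕ)) :
    χ k i (vfam k i') = if i' = i then 1 else 0 := by
  have hk0 : k ≠ 0 := by omega
  have hk1 : k - 1 ≠ 0 := by omega
  have hk1' : (k - 1) + 1 = k := by omega
  match i, i' with
  | Sum.inl m, Sum.inl m' =>
    simp only [χ, vfam, Sum.elim_inl, LinearMap.comp_apply, AlgHom.toLinearMap_apply, Φ1π,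
      φ1_abk, lcoeff_apply, coeff_mono]
    simp
  | Sum.inl m, Sum.inr (Sum.inl n') =>
    simp only [χ, vfam, Sum.elim_inl, Sum.elim_inr, LinearMap.comp_apply,
      AlgHom.toLinearMap_apply, Φ1π, φ1_cbd n' (k-1) hk1, lcoeff_apply]
    simp
  | Sum.inl m, Sum.inr (Sum.inr n') =>
    simp only [χ, vfam, Sum.elim_inl, Sum.elim_inr, LinearMap.comp_apply,
      AlgHom.toLinearMap_apply, Φ1π, φ1_cdk n' k hk0, lcoeff_apply]
    simp
  | Sum.inr (Sum.inr n), Sum.inl m' =>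
    simp only [χ, vfam, Sum.elim_inl, Sum.elim_inr, LinearMap.comp_apply,
      AlgHom.toLinearMap_apply, Φ2π, φ2_abk m' k hk0, lcoeff_apply]
    simp
  | Sum.inr (Sum.inr n), Sum.inr (Sum.inl n') =>
    simp only [χ, vfam, Sum.elim_inl, Sum.elim_inr, LinearMap.comp_apply,
      AlgHom.toLinearMap_apply, Φ2π, φ2_cbd, lcoeff_apply]
    simp
  | Sum.inr (Sum.inr n), Sum.inr (Sum.inr n') =>
    simp only [χ, vfam, Sum.elim_inl, Sum.elim_inr, LinearMap.comp_apply,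
      AlgHom.toLinearMap_apply, Φ2π, φ2_cdk, lcoeff_apply, coeff_mono]
    simp
  | Sum.inr (Sum.inl n), Sum.inl m' =>
    simp only [χ, vfam, Sum.elim_inl, Sum.elim_inr, LinearMap.comp_apply, LinearMap.add_apply,
      AlgHom.toLinearMap_apply, Φ1π, Φ2π, Φ3π, lcoeff_apply]
    rw [φ2_abk m' k hk0, add_zero, φ1_abk, ψh_abk]
    rw [show ψh (a ^ m' * b ^ k * c ^ 0 * d ^ 0) = ψh (a ^ m' * b ^ k) * ψh (c ^ 0 * d ^ 0) by
      rw [← map_mul]; ring_nf]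
    rw [ψh_abk]
    rw [show ψh (c ^ 0 * d ^ 0) = 1 by simp]
    rw [mul_one, char2]
    simp
  | Sum.inr (Sum.inl n), Sum.inr (Sum.inl n') =>
    simp only [χ, vfam, Sum.elim_inl, Sum.elim_inr, LinearMap.comp_apply, LinearMap.add_apply,
      AlgHom.toLinearMap_apply, Φ1π, Φ2π, Φ3π, lcoeff_apply]
    rw [φ2_cbd, add_zero, φ1_cbd n' (k-1) hk1, map_zero, add_zero, ψh_cbd, hk1', coeff_mono]
    simp
  | Sum.inr (Sum.inl n), Sum.inr (Sum.inr n') =>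
    simp only [χ, vfam, Sum.elim_inl, Sum.elim_inr, LinearMap.comp_apply, LinearMap.add_apply,
      AlgHom.toLinearMap_apply, Φ1π, Φ2π, Φ3π, lcoeff_apply]
    rw [φ1_cdk n' k hk0, map_zero, add_zero, ψh_cdk, φ2_cdk, char2]
    simp

lemma indep (k : ℕ) (hk : 3 ≤ k) : LinearIndependent (ZMod 2) (vfam k) := by
  rw [linearIndependent_iff]
  intro l hl
  ext i
  have h := congrArg (χ k i) hl
  rw [map_zero, Finsupp.linearCombination_apply, map_finsuppSum] at h
  simp only [map_smul, chi_delta k hk i, smul_eq_mul, mul_ite, mul_one, mul_zero] at h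
  rw [Finsupp.sum_eq_single i (fun j _ hji => by simp [hji]) (by simp)] at h
  simpa using h

theorem stmt_11 (k : ℕ) (hk : 3 ≤ k) :
    (Nwt k = Submodule.span (ZMod 2)
        (Set.range (Sum.elim (fun m : ℕ => π (a ^ m * b ^ k))
          (Sum.elim (fun n : ℕ => π (c ^ n * b * d ^ (k - 1)))
            (fun n : ℕ => π (c ^ n * d ^ k)))))) ∧
    LinearIndependent (ZMod 2) (Sum.elim (fun m : ℕ => π (a ^ m * b ^ k))
      (Sum.elim (fun n : ℕ => π (c ^ n * b * d ^ (k - 1)))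
        (fun n : ℕ => π (c ^ n * d ^ k)))) :=
  ⟨span_eq k hk, indep k hk⟩
end

section
/- The element x₁₃ := a·b·c²·(a² + c²) = a³·b·c² + a·b·c⁴ of S does not lie in the ideal J; that is, π(x₁₃) ≠ 0 in N. -/
open MvPolynomial

noncomputable abbrev P2 : Type := Polynomial (ZMod 2)

noncomputable def Iq : Ideal P2 := Ideal.span {(Polynomial.X : P2) ^ 4}

noncomputable def v : Fin 4 → P2 :=
  ![1, Polynomial.X, 1 + Polynomial.X, Polynomial.X + Polynomial.X ^ 2]

noncomputable def φ : S →+* P2 ⧸ Iq :=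
  (Ideal.Quotient.mk Iq).comp (aeval v).toRingHom

lemma two_eq_zero_s13 : (2 : P2) = 0 := by
  simpa using CharP.cast_eq_zero P2 2

lemma φ_r1 : φ (a * d + c * b) = 0 := by
  have h : (aeval v) (a * d + c * b) = 0 := by
    simp only [a, b, c, d, map_add, map_mul, aeval_X, v]
    simp [Matrix.cons_val_zero, Matrix.cons_val_one]
    linear_combination (Polynomial.X + Polynomial.X ^ 2 : P2) * two_eq_zero_s13
  simp [φ, h]

lemma φ_r2 : φ (b * d ^ 2 + b ^ 2 * d) = 0 := by
  have h : (aeval v) (b * d ^ 2 + b ^ 2 * d)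
      = (Polynomial.X : P2) ^ 4 * (1 + Polynomial.X) := by
    simp only [b, d, map_add, map_mul, map_pow, aeval_X, v]
    simp [Matrix.cons_val_one]
    linear_combination (Polynomial.X ^ 4 + Polynomial.X ^ 3 : P2) * two_eq_zero_s13
  rw [φ]
  simp only [RingHom.comp_apply, AlgHom.toRingHom_eq_coe, RingHom.coe_coe, h]
  rw [Ideal.Quotient.eq_zero_iff_mem, Iq]
  exact Ideal.mul_mem_right _ _ (Ideal.subset_span rfl)

lemma φ_x : φ (a * b * c ^ 2 * (a ^ 2 + c ^ 2))
    = Ideal.Quotient.mk Iq ((Polynomial.X : P2) ^ 3 + Polynomial.X ^ 5) := by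
  have h : (aeval v) (a * b * c ^ 2 * (a ^ 2 + c ^ 2))
      = (Polynomial.X : P2) ^ 3 + Polynomial.X ^ 5 := by
    simp only [a, b, c, map_add, map_mul, map_pow, aeval_X, v]
    simp [Matrix.cons_val_zero, Matrix.cons_val_one]
    linear_combination (Polynomial.X + 3 * Polynomial.X ^ 2 + 3 * Polynomial.X ^ 3
      + 2 * Polynomial.X ^ 4 : P2) * two_eq_zero_s13
  simp [φ, h]

lemma not_dvd : ¬ ((Polynomial.X : P2) ^ 3 + Polynomial.X ^ 5) ∈ Iq := by
  rw [Iq, Ideal.mem_span_singleton]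
  rintro ⟨q, hq⟩
  have h3 := congrArg (fun p : P2 => p.coeff 3) hq
  simp only [Polynomial.coeff_add, Polynomial.coeff_X_pow, mul_comm,
    Polynomial.coeff_mul_X_pow'] at h3
  norm_num at h3

theorem stmt_13 : a * b * c ^ 2 * (a ^ 2 + c ^ 2) ∉ J := by
  intro h
  have hmem : φ (a * b * c ^ 2 * (a ^ 2 + c ^ 2)) = 0 := by
    rw [J, Ideal.span] at h
    refine Submodule.span_induction ?_ ?_ ?_ ?_ h
    · rintro x (rfl | rfl)
      · exact φ_r1
      · exact φ_r2
    · simp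
    · intro x y _ _ hx hy; simp [map_add, hx, hy]
    · intro r x _ hx
      have : φ (r * x) = φ r * φ x := map_mul φ r x
      rw [smul_eq_mul, this, hx, mul_zero]
  rw [φ_x, Ideal.Quotient.eq_zero_iff_mem] at hmem
  exact not_dvd hmem
end

section
/- Let x₁₃ := a·b·c²·(a² + c²) ∈ S. Then x₁₃ ∉ J, and for every integer m ≥ 1 one has D_m(x₁₃) ∈ J; that is, the image of x₁₃ in N = S ⧸ J is a nonzero element annihilated by all the Milnor operations D_m, m ≥ 1. (This is the algebraic content of the counterexample: x₁₃ corresponds to a nonzero degree-13 class in H*(BG; ℤ/2), G = Sp(1)³/Γ₂, with Q_m x₁₃ = 0 for all m ≥ 1.) -/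
open MvPolynomial

/-- Values of the Milnor operations `D_m` on the generators `a, b, c, d`:
`D₀ = Q₀` with `D₀(a)=b, D₀(b)=0, D₀(c)=d, D₀(d)=0`;
`D₁ = Q₁` with `D₁(a)=ab, D₁(b)=b², D₁(c)=cd, D₁(d)=d²`;
and for `m ≥ 2`, `D_m = a^(2^(m−1))·D_{m−1} + b^(2^(m−1))·D_{m−2}` on `a, b`,
and `D_m = c^(2^(m−1))·D_{m−1} + d^(2^(m−1))·D_{m−2}` on `c, d`. -/
noncomputable def Dvals : ℕ → Fin 4 → S
  | 0 => ![b, 0, d, 0]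
  | 1 => ![a * b, b ^ 2, c * d, d ^ 2]
  | m + 2 => fun i =>
      if (i : ℕ) < 2 then
        a ^ 2 ^ (m + 1) * Dvals (m + 1) i + b ^ 2 ^ (m + 1) * Dvals m i
      else
        c ^ 2 ^ (m + 1) * Dvals (m + 1) i + d ^ 2 ^ (m + 1) * Dvals m i

/-- The `m`-th Milnor operation `D_m` on `S ≅ H^*(BSO(3)²; ℤ/2)`, as a derivation. -/
noncomputable def D (m : ℕ) : Derivation (ZMod 2) S S :=
  MvPolynomial.mkDerivation (ZMod 2) (Dvals m)

/-! ### Auxiliary lemmas -/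

lemma char2_eq_of_add_eq_zero {x y : S} (h : x + y = 0) : x = y := by
  have : x + (y + y) = (x + y) + y := by ring
  rw [CharTwo.add_self_eq_zero, h, zero_add, add_zero] at this
  exact this

lemma char2_two_mul (q : S) : 2 * q = 0 := by
  rw [two_mul, CharTwo.add_self_eq_zero]

/-- Key relation: `b⁴c²(a²+c²) ∈ J`. -/
lemma key_mem : b ^ 4 * c ^ 2 * (a ^ 2 + c ^ 2) ∈ J := by
  have h : b ^ 4 * c ^ 2 * (a ^ 2 + c ^ 2) =
      (b^3*c^3 + a*b^2*c^2*d + a^2*b^2*c*d + a^2*b^3*c) * (a * d + c * b) +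
      (a^2*b*c^2 + a^3*b*c) * (b * d ^ 2 + b ^ 2 * d) := by
    apply char2_eq_of_add_eq_zero
    have : b ^ 4 * c ^ 2 * (a ^ 2 + c ^ 2) +
        ((b^3*c^3 + a*b^2*c^2*d + a^2*b^2*c*d + a^2*b^3*c) * (a * d + c * b) +
        (a^2*b*c^2 + a^3*b*c) * (b * d ^ 2 + b ^ 2 * d)) =
        2 * (a^2*b^4*c^2 + b^4*c^4 + a*b^3*c^3*d + a^2*b^2*c^2*d^2 + a^3*b^2*c*d^2
          + a^2*b^3*c^2*d + a^3*b^3*c*d) := by ring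
    rw [this, char2_two_mul]
  rw [h]
  exact Ideal.add_mem _
    (Ideal.mul_mem_left _ _ (Ideal.subset_span (Set.mem_insert _ _)))
    (Ideal.mul_mem_left _ _ (Ideal.subset_span (Set.mem_insert_of_mem _ rfl)))

/-- The crucial combination `E m = b·D_m(a) + a·D_m(b)`. -/
noncomputable def E (m : ℕ) : S := b * Dvals m 0 + a * Dvals m 1

lemma E_zero : E 0 = b ^ 2 := by
  simp [E, Dvals]
  ring

lemma E_one : E 1 = 0 := by
  have : E 1 = 2 * (a * b^2) := by
    simp [E, Dvals]
    ring
  rw [this, char2_two_mul]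

lemma E_rec (m : ℕ) :
    E (m + 2) = a ^ 2 ^ (m + 1) * E (m + 1) + b ^ 2 ^ (m + 1) * E m := by
  simp only [E, Dvals]
  norm_num
  ring

lemma E_two : E 2 = b ^ 4 := by
  have h := E_rec 0
  rw [E_one, E_zero, mul_zero, zero_add] at h
  norm_num at h
  rw [h]; ring

lemma E_mem : ∀ m : ℕ, E (m + 1) ∈ Ideal.span ({b ^ 4} : Set S) := by
  have key : ∀ m : ℕ, E (m + 1) ∈ Ideal.span ({b ^ 4} : Set S) ∧
      E (m + 2) ∈ Ideal.span ({b ^ 4} : Set S) := by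
    intro m
    induction m with
    | zero =>
      constructor
      · rw [E_one]; exact Ideal.zero_mem _
      · rw [E_two]; exact Ideal.subset_span rfl
    | succ n ih =>
      refine ⟨ih.2, ?_⟩
      rw [E_rec]
      exact Ideal.add_mem _ (Ideal.mul_mem_left _ _ ih.2) (Ideal.mul_mem_left _ _ ih.1)
  exact fun m => (key m).1

noncomputable def ν : Fin 4 →₀ ℕ := Finsupp.single 0 3 + Finsupp.single 2 1
noncomputable def μ₁ : Fin 4 →₀ ℕ := ν + Finsupp.single 2 1 + Finsupp.single 1 1
noncomputable def μ₂ : Fin 4 →₀ ℕ := ν + Finsupp.single 0 1 + Finsupp.single 3 1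

lemma Lr1 (f : S) : coeff μ₁ (f * (a * d + c * b)) + coeff μ₂ (f * (a * d + c * b)) = 0 := by
  have expand : ∀ g : S, g * (a * d + c * b) = g * X 0 * X 3 + g * X 2 * X 1 := by
    intro g; rw [a, b, c, d]; ring
  rw [expand, coeff_add, coeff_add]
  have h1 : coeff μ₁ (f * X 0 * X 3) = 0 := by
    rw [coeff_mul_X']
    simp [μ₁, ν, Finsupp.mem_support_iff, Finsupp.add_apply, Finsupp.single_apply]
  have h2 : coeff μ₁ (f * X 2 * X 1) = coeff ν f := by
    rw [μ₁, coeff_mul_X, coeff_mul_X]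
  have h3 : coeff μ₂ (f * X 0 * X 3) = coeff ν f := by
    rw [μ₂, coeff_mul_X, coeff_mul_X]
  have h4 : coeff μ₂ (f * X 2 * X 1) = 0 := by
    rw [coeff_mul_X']
    simp [μ₂, ν, Finsupp.mem_support_iff, Finsupp.add_apply, Finsupp.single_apply]
  rw [h1, h2, h3, h4, zero_add, add_zero, CharTwo.add_self_eq_zero]

lemma Lr2 (f : S) : coeff μ₁ (f * (b * d ^ 2 + b ^ 2 * d)) + coeff μ₂ (f * (b * d ^ 2 + b ^ 2 * d)) = 0 := by
  have expand : ∀ g : S, g * (b * d ^ 2 + b ^ 2 * d) = g * X 1 * X 3 * X 3 + g * X 1 * X 1 * X 3 := by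
    intro g; rw [b, d]; ring
  rw [expand, coeff_add, coeff_add]
  have h1 : ∀ g : S, coeff μ₁ (g * X 3) = 0 := by
    intro g
    rw [coeff_mul_X']
    simp [μ₁, ν, Finsupp.mem_support_iff, Finsupp.add_apply, Finsupp.single_apply]
  have h2 : ∀ g : S, coeff μ₂ (g * X 3 * X 3) = 0 := by
    intro g
    rw [coeff_mul_X']
    have : (3 : Fin 4) ∈ μ₂.support := by
      simp [μ₂, ν, Finsupp.mem_support_iff, Finsupp.add_apply, Finsupp.single_apply]
    rw [if_pos this, coeff_mul_X']
    rw [if_neg]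
    simp [μ₂, ν, Finsupp.mem_support_iff, Finsupp.tsub_apply, Finsupp.add_apply,
      Finsupp.single_apply]
  have h3 : coeff μ₂ (f * X 1 * X 1 * X 3) = 0 := by
    rw [coeff_mul_X']
    have : (3 : Fin 4) ∈ μ₂.support := by
      simp [μ₂, ν, Finsupp.mem_support_iff, Finsupp.add_apply, Finsupp.single_apply]
    rw [if_pos this, coeff_mul_X']
    rw [if_neg]
    simp [μ₂, ν, Finsupp.mem_support_iff, Finsupp.tsub_apply, Finsupp.add_apply,
      Finsupp.single_apply]
  rw [h1, h1, h2, h3]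
  simp

lemma coeff_x13_μ₁ : coeff μ₁ (a * b * c ^ 2 * (a ^ 2 + c ^ 2)) = 1 := by
  have hx : a * b * c ^ 2 * (a ^ 2 + c ^ 2)
      = monomial (Finsupp.single 0 3 + Finsupp.single 1 1 + Finsupp.single 2 2) (1 : ZMod 2)
      + monomial (Finsupp.single 0 1 + Finsupp.single 1 1 + Finsupp.single 2 4) (1 : ZMod 2) := by
    rw [a, b, c]
    have : (X 0 : S) * X 1 * X 2 ^ 2 * (X 0 ^ 2 + X 2 ^ 2)
        = X 0 ^ 3 * X 1 ^ 1 * X 2 ^ 2 + X 0 ^ 1 * X 1 ^ 1 * X 2 ^ 4 := by ring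
    rw [this]
    simp only [X_pow_eq_monomial, monomial_mul, one_mul]
  rw [hx, coeff_add, coeff_monomial, coeff_monomial]
  rw [if_pos, if_neg]
  · simp
  · intro h
    have := DFunLike.congr_fun h 0
    simp [μ₁, ν, Finsupp.add_apply, Finsupp.single_apply] at this
  · ext i
    fin_cases i <;> simp [μ₁, ν, Finsupp.add_apply, Finsupp.single_apply]

lemma coeff_x13_μ₂ : coeff μ₂ (a * b * c ^ 2 * (a ^ 2 + c ^ 2)) = 0 := by
  have hx : a * b * c ^ 2 * (a ^ 2 + c ^ 2)
      = monomial (Finsupp.single 0 3 + Finsupp.single 1 1 + Finsupp.single 2 2) (1 : ZMod 2)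
      + monomial (Finsupp.single 0 1 + Finsupp.single 1 1 + Finsupp.single 2 4) (1 : ZMod 2) := by
    rw [a, b, c]
    have : (X 0 : S) * X 1 * X 2 ^ 2 * (X 0 ^ 2 + X 2 ^ 2)
        = X 0 ^ 3 * X 1 ^ 1 * X 2 ^ 2 + X 0 ^ 1 * X 1 ^ 1 * X 2 ^ 4 := by ring
    rw [this]
    simp only [X_pow_eq_monomial, monomial_mul, one_mul]
  rw [hx, coeff_add, coeff_monomial, coeff_monomial, if_neg, if_neg]
  · simp
  · intro h
    have := DFunLike.congr_fun h 1
    simp [μ₂, ν, Finsupp.add_apply, Finsupp.single_apply] at this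
  · intro h
    have := DFunLike.congr_fun h 1
    simp [μ₂, ν, Finsupp.add_apply, Finsupp.single_apply] at this

lemma D_apply (m : ℕ) :
    D m (a * b * c ^ 2 * (a ^ 2 + c ^ 2)) = E m * (c ^ 2 * (a ^ 2 + c ^ 2)) := by
  have hDa : D m a = Dvals m 0 := mkDerivation_X _ _ _
  have hDb : D m b = Dvals m 1 := mkDerivation_X _ _ _
  have hsq : ∀ x : S, D m (x * x) = 0 := by
    intro x
    rw [Derivation.leibniz, smul_eq_mul]
    exact CharTwo.add_self_eq_zero _
  have hc2 : D m (c ^ 2) = 0 := by rw [pow_two]; exact hsq c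
  have ha2 : D m (a ^ 2) = 0 := by rw [pow_two]; exact hsq a
  have hw : D m (a ^ 2 + c ^ 2) = 0 := by rw [map_add, ha2, hc2, add_zero]
  rw [Derivation.leibniz, hw, Derivation.leibniz, hc2, Derivation.leibniz, hDa, hDb]
  simp only [smul_eq_mul, mul_zero, smul_zero, zero_add, add_zero]
  simp only [E, smul_eq_mul]
  ring

theorem stmt_14 :
    a * b * c ^ 2 * (a ^ 2 + c ^ 2) ∉ J ∧
    ∀ m : ℕ, 1 ≤ m → D m (a * b * c ^ 2 * (a ^ 2 + c ^ 2)) ∈ J := by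
  constructor
  · -- nonmembership via the coefficient functional at μ₁ = (3,1,2,0), μ₂ = (4,0,1,1)
      intro h
      rw [J, Ideal.mem_span_pair] at h
      obtain ⟨f, g, hfg⟩ := h
      have hc := congrArg (fun p => coeff μ₁ p + coeff μ₂ p) hfg
      simp only [coeff_add] at hc
      rw [coeff_x13_μ₁, coeff_x13_μ₂] at hc
      have : coeff μ₁ (f * (a * d + c * b)) + coeff μ₂ (f * (a * d + c * b))
          + (coeff μ₁ (g * (b * d ^ 2 + b ^ 2 * d)) + coeff μ₂ (g * (b * d ^ 2 + b ^ 2 * d))) = 1 + 0 := by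
        rw [← hc]; ring
      rw [Lr1, Lr2] at this
      simp at this
  · intro m hm
    obtain ⟨k, rfl⟩ : ∃ k, m = k + 1 := ⟨m - 1, by omega⟩
    rw [D_apply]
    obtain ⟨s, hs⟩ := Ideal.mem_span_singleton.mp (E_mem k)
    rw [hs]
    have : b ^ 4 * s * (c ^ 2 * (a ^ 2 + c ^ 2)) = s * (b ^ 4 * c ^ 2 * (a ^ 2 + c ^ 2)) := by
      ring
    rw [this]
    exact Ideal.mul_mem_left _ _ key_mem
end
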